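/- Let p : ℝ×B^4 → S^1×B^4 be the universal covering. If a neatly embedded 4-ball D̃ in ℝ×B^4 has boundary 3-sphere lying in the region (a,b)×S^3 between two standard slices {a}×S^3 and {b}×S^3 with b−a < 1, then D̃ can be properly isotoped, fixing its boundary, to lie entirely within [a,b]×B^4, and hence projects to an embedded 4-ball in S^1×B^4 lying in the image of [a,b]×B^4. -/

import Mathlib

open Metric Set

noncomputable section

abbrev Eu (n : ℕ) := EuclideanSpace ℝ (Fin n)

def Sph (n : ℕ) : Set (Eu (n+1)) := sphere 0 1

def Ball (n : ℕ) : Set (Eu n) := closedBall 0 1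

structure SmoothEmbOn {E E' : Type*} [NormedAddCommGroup E] [NormedSpace ℝ E]
    [NormedAddCommGroup E'] [NormedSpace ℝ E'] (f : E → E') (s : Set E) (t : Set E') : Prop where
  smooth : ContDiffOn ℝ (⊤ : ℕ∞) f s
  maps : MapsTo f s t
  emb : Topology.IsEmbedding fun x : s => f x

structure DiffeoOn {E E' : Type*} [NormedAddCommGroup E] [NormedSpace ℝ E]
    [NormedAddCommGroup E'] [NormedSpace ℝ E'] (f : E → E') (g : E' → E)
    (s : Set E) (t : Set E') : Prop where
  smooth_toFun : ContDiffOn ℝ (⊤ : ℕ∞) f s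
  smooth_invFun : ContDiffOn ℝ (⊤ : ℕ∞) g t
  maps_toFun : MapsTo f s t
  maps_invFun : MapsTo g t s
  left_inv : ∀ x ∈ s, g (f x) = x
  right_inv : ∀ y ∈ t, f (g y) = y

def IsDiffeoSet {E E' : Type*} [NormedAddCommGroup E] [NormedSpace ℝ E]
    [NormedAddCommGroup E'] [NormedSpace ℝ E'] (s : Set E) (t : Set E') : Prop :=
  ∃ f g, DiffeoOn f g s t

open Real in
/-- The universal covering `p : ℝ × B⁴ → S¹ × B⁴`, `p(t,x) = (e^{2πit}, x)`. -/
def coveringMap (q : ℝ × Eu 4) : Eu 2 × Eu 4 :=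
  ((WithLp.equiv 2 (Fin 2 → ℝ)).symm ![Real.cos (2 * π * q.1), Real.sin (2 * π * q.1)], q.2)

/-- `ℝ × B⁴`, the universal cover of `S¹ × B⁴`. -/
def RxB4 : Set (ℝ × Eu 4) := univ ×ˢ Ball 4

/-- Its boundary `ℝ × S³`. -/
def bdRxB4 : Set (ℝ × Eu 4) := univ ×ˢ sphere 0 1


open Real intervalIntegral in

/-- A smooth strictly increasing function that is the identity on `[a',b']` and maps
`[-M,M]` into `[a,b]`. -/
private lemma exists_push (a b a' b' M : ℝ) (ha : a < a') (hb : b' < b) (hab' : a' ≤ b')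
    (hba : b - a ≤ 1) (hM1 : b' + 1 ≤ M) (hM2 : -M + 1 ≤ a') :
    ∃ ψ : ℝ → ℝ, ContDiff ℝ (⊤ : ℕ∞) ψ ∧ StrictMono ψ ∧ (∀ s ∈ Icc a' b', ψ s = s) ∧
      (∀ s ∈ Icc (-M) M, ψ s ∈ Icc a b) := by
  set η : ℝ := min (a' - a) (b - b') with hη
  have hη0 : 0 < η := lt_min (by linarith) (by linarith)
  have hη1 : η ≤ 1 := le_trans (min_le_left _ _) (by linarith)
  set δ : ℝ := η / 2 with hδ
  have hδ0 : 0 < δ := by positivity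
  have hδ1 : δ ≤ 1 / 2 := by rw [hδ]; linarith
  have hM0 : 1 ≤ M := by linarith
  set ε : ℝ := η / (2 * (2 * M + 1)) with hε
  have hε0 : 0 < ε := by positivity
  have hε1 : ε < 1 := by
    rw [hε, div_lt_one (by linarith)]
    nlinarith
  set f : ℝ → ℝ := fun u => smoothTransition ((u - (a' - δ)) / δ) *
      smoothTransition ((b' + δ - u) / δ) with hf
  have hf0 : ∀ u, 0 ≤ f u := fun u =>
    mul_nonneg (smoothTransition.nonneg _) (smoothTransition.nonneg _)
  have hf1 : ∀ u, f u ≤ 1 := fun u =>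
    mul_le_one₀ (smoothTransition.le_one _) (smoothTransition.nonneg _)
      (smoothTransition.le_one _)
  have hfid : ∀ u ∈ Icc a' b', f u = 1 := by
    intro u hu
    rw [hf]
    dsimp only
    rw [smoothTransition.one_of_one_le (by rw [le_div_iff₀ hδ0]; linarith [hu.1]),
      smoothTransition.one_of_one_le (by rw [le_div_iff₀ hδ0]; linarith [hu.2]), mul_one]
  have hfr : ∀ u, b' + δ ≤ u → f u = 0 := by
    intro u hu
    rw [hf]; dsimp only
    rw [smoothTransition.zero_of_nonpos (x := (b' + δ - u)/δ)
      (by rw [div_nonpos_iff]; right; constructor <;> linarith), mul_zero]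
  have hfl : ∀ u, u ≤ a' - δ → f u = 0 := by
    intro u hu
    rw [hf]; dsimp only
    rw [smoothTransition.zero_of_nonpos (x := (u - (a' - δ))/δ)
      (by rw [div_nonpos_iff]; right; constructor <;> linarith), zero_mul]
  have hfsm : ContDiff ℝ (⊤ : ℕ∞) f := by
    apply ContDiff.mul
    · exact Real.smoothTransition.contDiff.comp ((contDiff_id.sub contDiff_const).div_const _)
    · exact Real.smoothTransition.contDiff.comp ((contDiff_const.sub contDiff_id).div_const _)
  set ρ : ℝ → ℝ := fun u => ε + (1 - ε) * f u with hρ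
  have hρsm : ContDiff ℝ (⊤ : ℕ∞) ρ := contDiff_const.add (contDiff_const.mul hfsm)
  have hρc : Continuous ρ := hρsm.continuous
  have hρpos : ∀ u, 0 < ρ u := fun u => by
    have := hf0 u; have : 0 ≤ (1 - ε) * f u := mul_nonneg (by linarith) (hf0 u)
    rw [hρ]; dsimp only; linarith
  have hρ1 : ∀ u, ρ u ≤ 1 := fun u => by
    have h1 : (1 - ε) * f u ≤ (1 - ε) * 1 := by
      apply mul_le_mul_of_nonneg_left (hf1 u) (by linarith)
    rw [hρ]; dsimp only; linarith
  have hρid : ∀ u ∈ Icc a' b', ρ u = 1 := fun u hu => by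
    rw [hρ]; dsimp only; rw [hfid u hu]; ring
  have hint : ∀ c e : ℝ, IntervalIntegrable ρ MeasureTheory.volume c e :=
    fun c e => hρc.intervalIntegrable c e
  set ψ : ℝ → ℝ := fun s => a' + ∫ u in a'..s, ρ u with hψ
  have hderiv : ∀ s, HasDerivAt ψ (ρ s) s := by
    intro s
    apply HasDerivAt.const_add
    exact intervalIntegral.integral_hasDerivAt_right (hint a' s)
      (hρc.stronglyMeasurableAtFilter _ _) hρc.continuousAt
  have hdiff : Differentiable ℝ ψ := fun s => (hderiv s).differentiableAt
  have hψderiv : deriv ψ = ρ := funext fun s => (hderiv s).deriv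
  have hψsm : ContDiff ℝ (⊤ : ℕ∞) ψ := by
    rw [contDiff_infty_iff_deriv]
    exact ⟨hdiff, by rw [hψderiv]; exact hρsm⟩
  have hmono : StrictMono ψ := strictMono_of_deriv_pos (by rw [hψderiv]; exact hρpos)
  have hfc : Continuous f := hfsm.continuous
  have hintf : ∀ c e : ℝ, IntervalIntegrable f MeasureTheory.volume c e :=
    fun c e => hfc.intervalIntegrable c e
  have hconst : ∀ c e : ℝ, c ≤ e → (∫ u in c..e, (1:ℝ)) = e - c := by
    intro c e _; simp
  have hρ_on : ∀ c e : ℝ, a' ≤ c → c ≤ e → e ≤ b' → (∫ u in c..e, ρ u) = e - c := by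
    intro c e h1 h2 h3
    rw [intervalIntegral.integral_congr (g := fun _ => (1:ℝ)) ?_, hconst c e h2]
    intro u hu
    rw [uIcc_of_le h2] at hu
    exact hρid u ⟨h1.trans hu.1, hu.2.trans h3⟩
  have hid : ∀ s ∈ Icc a' b', ψ s = s := by
    intro s hs
    rw [hψ]; dsimp only
    rw [hρ_on a' s le_rfl hs.1 hs.2]; ring
  -- splitting the integral of ρ
  have hsplit : ∀ c e : ℝ, (∫ u in c..e, ρ u) = ε * (e - c) + (1 - ε) * ∫ u in c..e, f u := by
    intro c e
    rw [hρ]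
    dsimp only
    rw [intervalIntegral.integral_add (continuous_const.intervalIntegrable _ _) ((continuous_const.mul hfc).intervalIntegrable _ _) (f := fun _ => ε) (g := fun u => (1 - ε) * f u),
      intervalIntegral.integral_const, intervalIntegral.integral_const_mul]
    simp [mul_comm]
  -- bound on ∫ f over [b', M]
  have hfint_right : (∫ u in b'..M, f u) ≤ δ := by
    have h1 : b' ≤ b' + δ := by linarith
    have h2 : b' + δ ≤ M := by linarith
    rw [← intervalIntegral.integral_add_adjacent_intervals (hintf b' (b'+δ)) (hintf (b'+δ) M)]
    have e2 : (∫ u in (b'+δ)..M, f u) = 0 := by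
      rw [intervalIntegral.integral_congr (g := fun _ => (0:ℝ)) ?_]
      · simp
      · intro u hu
        rw [uIcc_of_le h2] at hu
        exact hfr u hu.1
    have e1 : (∫ u in b'..(b'+δ), f u) ≤ δ := by
      calc (∫ u in b'..(b'+δ), f u) ≤ ∫ u in b'..(b'+δ), (1:ℝ) :=
            intervalIntegral.integral_mono_on h1 (hintf _ _) (continuous_const.intervalIntegrable _ _) (fun u _ => hf1 u)
        _ = δ := by rw [hconst _ _ h1]; ring
    linarith
  have hfint_left : (∫ u in (-M)..a', f u) ≤ δ := by
    have h1 : a' - δ ≤ a' := by linarith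
    have h2 : -M ≤ a' - δ := by linarith
    rw [← intervalIntegral.integral_add_adjacent_intervals (hintf (-M) (a'-δ)) (hintf (a'-δ) a')]
    have e2 : (∫ u in (-M)..(a'-δ), f u) = 0 := by
      rw [intervalIntegral.integral_congr (g := fun _ => (0:ℝ)) ?_]
      · simp
      · intro u hu
        rw [uIcc_of_le h2] at hu
        exact hfl u hu.2
    have e1 : (∫ u in (a'-δ)..a', f u) ≤ δ := by
      calc (∫ u in (a'-δ)..a', f u) ≤ ∫ u in (a'-δ)..a', (1:ℝ) :=
            intervalIntegral.integral_mono_on h1 (hintf _ _) (continuous_const.intervalIntegrable _ _) (fun u _ => hf1 u)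
        _ = δ := by rw [hconst _ _ h1]; ring
    linarith
  have hfint_nonneg : ∀ c e : ℝ, c ≤ e → 0 ≤ ∫ u in c..e, f u := by
    intro c e hce
    apply intervalIntegral.integral_nonneg hce
    intro u _; exact hf0 u
  have hεb : ε * (2 * M + 1) = η / 2 := by
    rw [hε]; field_simp
  have key_right : ψ M ≤ b := by
    rw [hψ]; dsimp only
    rw [← intervalIntegral.integral_add_adjacent_intervals (hint a' b') (hint b' M),
      hρ_on a' b' le_rfl hab' le_rfl, hsplit b' M]
    have h1 : (∫ u in b'..M, f u) ≤ δ := hfint_right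
    have h2 : (0:ℝ) ≤ ∫ u in b'..M, f u := hfint_nonneg b' M (by linarith)
    have h3 : ε * (M - b') ≤ η / 2 := by
      rw [← hεb]
      apply mul_le_mul_of_nonneg_left _ hε0.le
      linarith
    have h4 : (1 - ε) * (∫ u in b'..M, f u) ≤ δ := by
      nlinarith
    have h5 : η ≤ b - b' := min_le_right _ _
    rw [hδ] at h4
    linarith
  have key_left : a ≤ ψ (-M) := by
    rw [hψ]; dsimp only
    rw [intervalIntegral.integral_symm, hsplit (-M) a']
    have h1 : (∫ u in (-M)..a', f u) ≤ δ := hfint_left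
    have h2 : (0:ℝ) ≤ ∫ u in (-M)..a', f u := hfint_nonneg (-M) a' (by linarith)
    have h3 : ε * (a' - -M) ≤ η / 2 := by
      rw [← hεb]
      apply mul_le_mul_of_nonneg_left _ hε0.le
      linarith
    have h4 : (1 - ε) * (∫ u in (-M)..a', f u) ≤ δ := by
      nlinarith
    have h5 : η ≤ a' - a := min_le_left _ _
    rw [hδ] at h4
    linarith
  refine ⟨ψ, hψsm, hmono, hid, fun s hs => ?_⟩
  exact ⟨le_trans key_left (hmono.monotone hs.1), le_trans (hmono.monotone hs.2) key_right⟩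


open Real in
private lemma contDiff_coveringMap : ContDiff ℝ (⊤ : ℕ∞) coveringMap := by
  apply ContDiff.prodMk _ (contDiff_snd)
  have h1 : ContDiff ℝ (⊤ : ℕ∞) (fun q : ℝ × Eu 4 => (![Real.cos (2 * π * q.1), Real.sin (2 * π * q.1)] : Fin 2 → ℝ)) := by
    rw [contDiff_pi]
    intro i
    fin_cases i
    · show ContDiff ℝ (⊤ : ℕ∞) fun x : ℝ × Eu 4 => Real.cos (2 * π * x.1)
      exact (Real.contDiff_cos.comp ((contDiff_const.mul contDiff_fst)))
    · show ContDiff ℝ (⊤ : ℕ∞) fun x : ℝ × Eu 4 => Real.sin (2 * π * x.1)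
      exact (Real.contDiff_sin.comp ((contDiff_const.mul contDiff_fst)))
  exact (EuclideanSpace.equiv (Fin 2) ℝ).symm.contDiff.comp h1

open Real in
private lemma coveringMap_fst_mem (q : ℝ × Eu 4) : (coveringMap q).1 ∈ Sph 1 := by
  simp only [coveringMap, Sph, mem_sphere_iff_norm, sub_zero]
  rw [EuclideanSpace.norm_eq]
  have : ∀ i : Fin 2, ((WithLp.equiv 2 (Fin 2 → ℝ)).symm ![Real.cos (2 * π * q.1), Real.sin (2 * π * q.1)]) i = (![Real.cos (2 * π * q.1), Real.sin (2 * π * q.1)] : Fin 2 → ℝ) i := fun i => rfl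
  rw [Fin.sum_univ_two, this 0, this 1]
  simp only [Matrix.cons_val_zero, Matrix.cons_val_one, Matrix.head_cons, Real.norm_eq_abs, sq_abs]
  rw [Real.cos_sq_add_sin_sq (2 * π * q.1)]
  exact Real.sqrt_one

open Real in
private lemma coveringMap_inj {a b : ℝ} (h : b - a < 1) {s t : ℝ} (hs : s ∈ Icc a b) (ht : t ∈ Icc a b)
    {v w : Eu 4} (he : coveringMap (s, v) = coveringMap (t, w)) : (s, v) = (t, w) := by
  have h2 := congrArg Prod.snd he
  have h1 := congrArg Prod.fst he
  simp only [coveringMap] at h1 h2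
  have hc : Real.cos (2 * π * s) = Real.cos (2 * π * t) := by
    have := congrArg (fun x => ((WithLp.equiv 2 (Fin 2 → ℝ)) x) 0) h1
    simpa using this
  have hsin : Real.sin (2 * π * s) = Real.sin (2 * π * t) := by
    have := congrArg (fun x => ((WithLp.equiv 2 (Fin 2 → ℝ)) x) 1) h1
    simpa using this
  have hone : Real.cos (2 * π * s - 2 * π * t) = 1 := by
    rw [Real.cos_sub, hc, hsin]
    rw [← Real.sin_sq_add_cos_sq (2 * π * t)]; ring
  have hst : 2 * π * s - 2 * π * t = 0 := by
    rw [Real.cos_eq_one_iff_of_lt_of_lt] at hone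
    · exact hone
    · nlinarith [Real.pi_pos, hs.1, hs.2, ht.1, ht.2]
    · nlinarith [Real.pi_pos, hs.1, hs.2, ht.1, ht.2]
  have hst' : s = t := by
    have hpi := Real.pi_ne_zero
    have : 2 * π * (s - t) = 0 := by ring_nf; ring_nf at hst; linarith
    rcases mul_eq_zero.mp this with h' | h'
    · exact absurd h' (by positivity)
    · linarith [sub_eq_zero.mp h']
  rw [hst', h2]

/-- if a neatly embedded 4-ball `D̃` in `ℝ × B⁴` has boundary 3-sphere
lying in `(a,b) × S³` with `b - a < 1`, then `D̃` can be properly isotoped rel boundary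
into `[a,b] × B⁴`, and hence projects to an embedded 4-ball in `S¹ × B⁴` lying in the
image of `[a,b] × B⁴`. -/
theorem ball_in_universal_cover_pushed_between_slices
    (a b : ℝ) (hab : a < b) (hlen : b - a < 1)
    (d : Eu 4 → ℝ × Eu 4)
    (hd : SmoothEmbOn d (Ball 4) RxB4)
    (hneat : ∀ x ∈ Ball 4, (d x ∈ bdRxB4 ↔ x ∈ sphere (0 : Eu 4) 1))
    (hbd : d '' sphere 0 1 ⊆ (Ioo a b) ×ˢ sphere 0 1) :
    ∃ F : ℝ → Eu 4 → ℝ × Eu 4,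
      ContinuousOn (fun p : ℝ × Eu 4 => F p.1 p.2) (Icc 0 1 ×ˢ Ball 4) ∧
      (∀ t ∈ Icc (0:ℝ) 1, SmoothEmbOn (F t) (Ball 4) RxB4 ∧
        ∀ x ∈ Ball 4, (F t x ∈ bdRxB4 ↔ x ∈ sphere (0 : Eu 4) 1)) ∧
      (∀ x ∈ Ball 4, F 0 x = d x) ∧
      (∀ t ∈ Icc (0:ℝ) 1, ∀ x ∈ sphere (0 : Eu 4) 1, F t x = d x) ∧
      F 1 '' Ball 4 ⊆ (Icc a b) ×ˢ Ball 4 ∧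
      SmoothEmbOn (coveringMap ∘ F 1) (Ball 4)
        ((Sph 1 : Set (Eu 2)) ×ˢ Ball 4) ∧
      (coveringMap ∘ F 1) '' Ball 4 ⊆ coveringMap '' ((Icc a b) ×ˢ Ball 4) := by

  classical
  -- continuity of d
  have hdc : ContinuousOn d (Ball 4) := hd.smooth.continuousOn
  have hsub : sphere (0:Eu 4) 1 ⊆ Ball 4 := sphere_subset_closedBall
  have hdinj : ∀ x ∈ Ball 4, ∀ y ∈ Ball 4, d x = d y → x = y := by
    intro x hx y hy h
    have := hd.emb.injective (a₁ := ⟨x, hx⟩) (a₂ := ⟨y, hy⟩) h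
    exact congrArg Subtype.val this
  -- the compact set of boundary first coordinates
  set K : Set ℝ := insert ((a + b) / 2) ((fun x => (d x).1) '' sphere 0 1) with hK
  have hKcp : IsCompact K := by
    apply IsCompact.insert
    exact (isCompact_sphere 0 1).image_of_continuousOn
      (continuous_fst.comp_continuousOn (hdc.mono hsub))
  have hKne : K.Nonempty := insert_nonempty _ _
  have hKsub : K ⊆ Ioo a b := by
    intro s hs
    rcases mem_insert_iff.mp hs with hs | ⟨x, hx, rfl⟩
    · subst hs; exact ⟨by linarith, by linarith⟩
    · exact (hbd ⟨x, hx, rfl⟩).1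
  set a' : ℝ := sInf K with ha'
  set b' : ℝ := sSup K with hb'
  have ha'K : a' ∈ K := hKcp.sInf_mem hKne
  have hb'K : b' ∈ K := hKcp.sSup_mem hKne
  have haa' : a < a' := (hKsub ha'K).1
  have hbb' : b' < b := (hKsub hb'K).2
  have hab' : a' ≤ b' := csInf_le_csSup hKne hKcp.bddBelow hKcp.bddAbove
  have hKmem : ∀ x ∈ sphere (0:Eu 4) 1, (d x).1 ∈ Icc a' b' := by
    intro x hx
    have hm : (d x).1 ∈ K := mem_insert_of_mem _ ⟨x, hx, rfl⟩
    exact ⟨csInf_le hKcp.bddBelow hm, le_csSup hKcp.bddAbove hm⟩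
  -- a bound
  obtain ⟨C, hC⟩ := (isCompact_closedBall (0:Eu 4) 1).exists_bound_of_continuousOn
    (continuous_fst.comp_continuousOn hdc)
  set M : ℝ := |C| + |a'| + |b'| + 1 with hM
  have hM1 : b' + 1 ≤ M := by
    have := le_abs_self b'
    have := abs_nonneg C
    have := abs_nonneg a'
    rw [hM]; linarith
  have hM2 : -M + 1 ≤ a' := by
    have := neg_abs_le a'
    have := abs_nonneg C
    have := abs_nonneg b'
    rw [hM]; linarith
  have hMd : ∀ x ∈ Ball 4, (d x).1 ∈ Icc (-M) M := by
    intro x hx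
    have h := hC x hx
    simp only [Function.comp_apply] at h
    rw [Real.norm_eq_abs] at h
    have h1 := abs_le.mp (h.trans (le_abs_self C))
    have := abs_nonneg a'
    have := abs_nonneg b'
    constructor <;> [rw [hM]; rw [hM]] <;> linarith [h1.1, h1.2]
  -- the push function
  obtain ⟨ψ, hψsm, hψmono, hψid, hψmaps⟩ :=
    exists_push a b a' b' M haa' hbb' hab' hlen.le hM1 hM2
  -- the isotopy
  set F : ℝ → Eu 4 → ℝ × Eu 4 :=
    fun t x => ((1 - t) * (d x).1 + t * ψ ((d x).1), (d x).2) with hF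
  -- strict monotonicity of the time-t push
  have hg : ∀ t ∈ Icc (0:ℝ) 1, StrictMono (fun s => (1 - t) * s + t * ψ s) := by
    intro t ht s s' hss
    rcases eq_or_lt_of_le ht.1 with h0 | h0
    · simp only [← h0]
      simpa using hss
    · have h1 : (1 - t) * s ≤ (1 - t) * s' :=
        mul_le_mul_of_nonneg_left hss.le (by linarith [ht.2])
      have h2 : t * ψ s < t * ψ s' := mul_lt_mul_of_pos_left (hψmono hss) h0
      exact add_lt_add_of_le_of_lt h1 h2
  -- injectivity of F t on the ball
  have hFinj : ∀ t ∈ Icc (0:ℝ) 1, ∀ x ∈ Ball 4, ∀ y ∈ Ball 4, F t x = F t y → x = y := by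
    intro t ht x hx y hy h
    simp only [hF, Prod.mk.injEq] at h
    have h1 : (d x).1 = (d y).1 := (hg t ht).injective h.1
    exact hdinj x hx y hy (Prod.ext h1 h.2)
  -- smoothness of F t
  have hd1 : ContDiffOn ℝ (⊤ : ℕ∞) (fun x => (d x).1) (Ball 4) :=
    contDiff_fst.comp_contDiffOn hd.smooth
  have hd2 : ContDiffOn ℝ (⊤ : ℕ∞) (fun x => (d x).2) (Ball 4) :=
    contDiff_snd.comp_contDiffOn hd.smooth
  have hFsm : ∀ t : ℝ, ContDiffOn ℝ (⊤ : ℕ∞) (F t) (Ball 4) := by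
    intro t
    apply ContDiffOn.prodMk _ hd2
    exact (contDiffOn_const.mul hd1).add
      (contDiffOn_const.mul (hψsm.comp_contDiffOn hd1))
  -- F t maps into RxB4
  have hFmaps : ∀ t : ℝ, MapsTo (F t) (Ball 4) RxB4 := by
    intro t x hx
    have := hd.maps hx
    simp only [RxB4, mem_prod, mem_univ, true_and] at this ⊢
    exact this
  haveI : CompactSpace (Ball 4) := isCompact_iff_compactSpace.mp (isCompact_closedBall _ _)
  -- F t is an embedding of the ball
  have hFemb : ∀ t ∈ Icc (0:ℝ) 1, Topology.IsEmbedding fun x : Ball 4 => F t x := by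
    intro t ht
    have hcont : Continuous fun x : Ball 4 => F t x :=
      continuousOn_iff_continuous_restrict.mp (hFsm t).continuousOn
    have hinj : Function.Injective fun x : Ball 4 => F t x := by
      rintro ⟨x, hx⟩ ⟨y, hy⟩ h
      exact Subtype.ext (hFinj t ht x hx y hy h)
    exact (hcont.isClosedEmbedding hinj).toIsEmbedding
  -- neatness of F t
  have hFneat : ∀ t : ℝ, ∀ x ∈ Ball 4, (F t x ∈ bdRxB4 ↔ x ∈ sphere (0:Eu 4) 1) := by
    intro t x hx
    rw [← hneat x hx]
    simp only [bdRxB4, mem_prod, mem_univ, true_and, hF]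
  -- F t fixes the boundary sphere
  have hFfix : ∀ t : ℝ, ∀ x ∈ sphere (0:Eu 4) 1, F t x = d x := by
    intro t x hx
    have h1 : ψ ((d x).1) = (d x).1 := hψid _ (hKmem x hx)
    simp only [hF, h1]
    exact Prod.ext (by ring) rfl
  -- F 1 lands in Icc a b ×ˢ Ball 4
  have hF1 : ∀ x ∈ Ball 4, F 1 x ∈ Icc a b ×ˢ Ball 4 := by
    intro x hx
    constructor
    · have : (F 1 x).1 = ψ ((d x).1) := by simp [hF]
      rw [this]
      exact hψmaps _ (hMd x hx)
    · exact (hFmaps 1 hx).2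
  have hF1img : F 1 '' Ball 4 ⊆ Icc a b ×ˢ Ball 4 := by
    rintro _ ⟨x, hx, rfl⟩; exact hF1 x hx
  refine ⟨F, ?_, ?_, ?_, ?_, hF1img, ?_, ?_⟩
  · -- joint continuity
    have c2 : ContinuousOn (fun p : ℝ × Eu 4 => d p.2) (Icc 0 1 ×ˢ Ball 4) :=
      hdc.comp continuous_snd.continuousOn (fun p hp => hp.2)
    have c21 : ContinuousOn (fun p : ℝ × Eu 4 => (d p.2).1) (Icc 0 1 ×ˢ Ball 4) :=
      continuous_fst.comp_continuousOn c2
    apply ContinuousOn.prodMk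
    · exact ((continuousOn_const.sub continuous_fst.continuousOn).mul c21).add
        (continuous_fst.continuousOn.mul (hψsm.continuous.comp_continuousOn c21))
    · exact continuous_snd.comp_continuousOn c2
  · -- embedding at each time
    intro t ht
    exact ⟨⟨hFsm t, hFmaps t, hFemb t ht⟩, fun x hx => hFneat t x hx⟩
  · -- F 0 = d
    intro x hx
    simp only [hF]
    exact Prod.ext (by ring) rfl
  · -- fixes boundary
    intro t _ x hx
    exact hFfix t x hx
  · -- coveringMap ∘ F 1 is a smooth embedding
    refine ⟨contDiff_coveringMap.comp_contDiffOn (hFsm 1), ?_, ?_⟩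
    · intro x hx
      exact mem_prod.mpr ⟨coveringMap_fst_mem _, (hFmaps 1 hx).2⟩
    · have hcont : Continuous fun x : Ball 4 => (coveringMap ∘ F 1) x :=
        continuousOn_iff_continuous_restrict.mp
          ((contDiff_coveringMap.comp_contDiffOn (hFsm 1)).continuousOn)
      have hinj : Function.Injective fun x : Ball 4 => (coveringMap ∘ F 1) x := by
        rintro ⟨x, hx⟩ ⟨y, hy⟩ h
        simp only [Function.comp_apply] at h
        have hx1 := hF1 x hx
        have hy1 := hF1 y hy
        have h' : coveringMap ((F 1 x).1, (F 1 x).2) = coveringMap ((F 1 y).1, (F 1 y).2) := by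
          rw [Prod.mk.eta, Prod.mk.eta]; exact h
        have := coveringMap_inj hlen hx1.1 hy1.1 h'
        have hFeq : F 1 x = F 1 y := by
          have e1 := congrArg Prod.fst this
          have e2 := congrArg Prod.snd this
          exact Prod.ext e1 e2
        exact Subtype.ext (hFinj 1 ⟨zero_le_one, le_rfl⟩ x hx y hy hFeq)
      exact (hcont.isClosedEmbedding hinj).toIsEmbedding
  · -- image inclusion
    rw [image_comp]
    exact image_mono hF1img
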